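/- Let n ≥ 5 and t ∈ {2, 3}, let R_(n,t) be the (n,t)-regular graph of order n (in which every vertex has degree n − t), and let c be a locating rainbow k-coloring of R_(n,t) with k ≥ 3. Then the rainbow code of each vertex contains at most t − 1 entries equal to 2. -/

import Mathlib

namespace LocatingRainbow

open SimpleGraph

variable {V : Type*}

/-- The internal vertices of a walk: its support without the endpoints. -/
def internalVertices {G : SimpleGraph V} {u v : V} (p : G.Walk u v) : List V :=
  p.support.tail.dropLast

/-- `c` is a rainbow vertex coloring of `G` (with colors in `Fin k`) if any two distinct
vertices are joined by a path whose internal vertices have pairwise distinct colors. -/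
def IsRainbowVertexColoring (G : SimpleGraph V) {k : ℕ} (c : V → Fin k) : Prop :=
  ∀ u v : V, u ≠ v → ∃ p : G.Walk u v, p.IsPath ∧ ((internalVertices p).map c).Nodup

/-- The distance from a vertex `v` to the color class of the color `i`. -/
noncomputable def distToColor (G : SimpleGraph V) {k : ℕ} (c : V → Fin k) (v : V) (i : Fin k) :
    ℕ :=
  sInf {m | ∃ y, c y = i ∧ G.dist v y = m}

/-- The rainbow code of a vertex `v`: the vector of distances to all color classes. -/
noncomputable def rainbowCode (G : SimpleGraph V) {k : ℕ} (c : V → Fin k) (v : V) :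
    Fin k → ℕ :=
  fun i => distToColor G c v i

/-- `c` is a locating rainbow coloring if it is a rainbow vertex coloring and distinct
vertices have distinct rainbow codes. -/
def IsLocatingRainbowColoring (G : SimpleGraph V) {k : ℕ} (c : V → Fin k) : Prop :=
  IsRainbowVertexColoring G c ∧ Function.Injective (rainbowCode G c)

/-- The rainbow vertex connection number of `G`. -/
noncomputable def rvc (G : SimpleGraph V) : ℕ :=
  sInf {k | ∃ c : V → Fin k, IsRainbowVertexColoring G c}

/-- The locating rainbow connection number of `G`. -/
noncomputable def rvcl (G : SimpleGraph V) : ℕ :=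
  sInf {k | ∃ c : V → Fin k, IsLocatingRainbowColoring G c}

end LocatingRainbow

namespace LocatingRainbow

open SimpleGraph

/-- The `(n,2)`-regular graph (for even `n`): the complete graph on `Fin n` with the
perfect matching `{vᵢ v_{i+n/2}}` (indices mod `n`) removed; every vertex has degree
`n - 2`. -/
def Rn2 (n : ℕ) : SimpleGraph (Fin n) where
  Adj i j := i ≠ j ∧ (i.val + n / 2) % n ≠ j.val ∧ (j.val + n / 2) % n ≠ i.val
  symm := ⟨fun _ _ ⟨h1, h2, h3⟩ => ⟨h1.symm, h3, h2⟩⟩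
  loopless := ⟨fun _ h => h.1 rfl⟩

/-- The `(n,3)`-regular graph: the complement of the cycle `C_n`, i.e. the complete graph
with the edges of a Hamiltonian cycle removed; every vertex has degree `n - 3`. -/
def Rn3 (n : ℕ) : SimpleGraph (Fin n) := (cycleGraph n)ᶜ

/-- The `(n,t)`-regular graph for `t ∈ {2, 3}`. -/
def Rnt (n t : ℕ) : SimpleGraph (Fin n) := if t = 2 then Rn2 n else Rn3 n

end LocatingRainbow

open LocatingRainbow in
/-- For `n ≥ 5`, `t ∈ {2,3}` (with `n` even in case `t = 2`), and a locating rainbow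
`k`-coloring `c` of the `(n,t)`-regular graph with `k ≥ 3`, the rainbow code of each
vertex contains at most `t - 1` entries equal to `2`. -/
theorem rainbowCode_entries_two_le {n t k : ℕ} (hn : 5 ≤ n) (ht : t = 2 ∨ t = 3)
    (hpar : t = 2 → Even n) (hk : 3 ≤ k) (c : Fin n → Fin k)
    (hc : IsLocatingRainbowColoring (Rnt n t) c) (v : Fin n) :
    {i : Fin k | rainbowCode (Rnt n t) c v i = 2}.ncard ≤ t - 1 := by

  classical
  set G := Rnt n t with hG
  set N : Set (Fin n) := {y | y ≠ v ∧ ¬ G.Adj v y} with hN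
  -- witness function: for each color at distance 2, a vertex of that color at distance 2
  set f : Fin k → Fin n := fun i =>
    if h : ∃ y, c y = i ∧ G.dist v y = 2 then h.choose else v with hf
  have key : ∀ i ∈ {i : Fin k | rainbowCode G c v i = 2},
      c (f i) = i ∧ G.dist v (f i) = 2 := by
    intro i hi
    simp only [Set.mem_setOf_eq, rainbowCode, distToColor] at hi
    have hne : {m | ∃ y, c y = i ∧ G.dist v y = m}.Nonempty := by
      by_contra hc
      rw [Set.not_nonempty_iff_eq_empty] at hc
      rw [hc, Nat.sInf_empty] at hi
      exact absurd hi (by norm_num)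
    have hmem := Nat.sInf_mem hne
    rw [hi] at hmem
    obtain ⟨y, hy1, hy2⟩ := hmem
    have hh : ∃ y, c y = i ∧ G.dist v y = 2 := ⟨y, hy1, hy2⟩
    simp only [hf, dif_pos hh]
    exact hh.choose_spec
  have hmaps : ∀ i ∈ {i : Fin k | rainbowCode G c v i = 2}, f i ∈ N := by
    intro i hi
    obtain ⟨-, hd⟩ := key i hi
    constructor
    · intro h; rw [h, SimpleGraph.dist_self] at hd; exact absurd hd (by norm_num)
    · intro h
      rw [(SimpleGraph.dist_eq_one_iff_adj).mpr h] at hd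
      exact absurd hd (by norm_num)
  have hinj : Set.InjOn f {i : Fin k | rainbowCode G c v i = 2} := by
    intro i hi j hj hij
    rw [← (key i hi).1, ← (key j hj).1, hij]
  have hle : {i : Fin k | rainbowCode G c v i = 2}.ncard ≤ N.ncard :=
    Set.ncard_le_ncard_of_injOn f hmaps hinj (Set.toFinite N)
  refine hle.trans ?_
  -- now bound the number of non-neighbours of v
  rcases ht with rfl | rfl
  · -- t = 2 : the only non-neighbour is the matched vertex
    have heven := hpar rfl
    have hhalf : n / 2 + n / 2 = n := by
      obtain ⟨m, hm⟩ := heven; omega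
    have hwlt : (v.val + n / 2) % n < n := Nat.mod_lt _ (by omega)
    have hsub : N ⊆ {(⟨(v.val + n / 2) % n, hwlt⟩ : Fin n)} := by
      intro y hy
      obtain ⟨hyv, hna⟩ := hy
      have hGA : G = Rn2 n := by rw [hG]; rfl
      rw [hGA] at hna
      simp only [Rn2, ne_eq] at hna
      push_neg at hna
      have hvy : v ≠ y := fun h => hyv h.symm
      by_cases h1 : (v.val + n / 2) % n = y.val
      · exact Set.mem_singleton_iff.mpr (Fin.ext h1.symm)
      · have h := hna hvy h1
        have h2 : (v.val + n / 2) % n = y.val := by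
          have h3 : ((y.val + n / 2) % n + n / 2) % n = (v.val + n / 2) % n := by
            rw [h]
          rw [Nat.mod_add_mod, add_assoc, hhalf, Nat.add_mod_right,
            Nat.mod_eq_of_lt y.isLt] at h3
          exact h3.symm
        exact Set.mem_singleton_iff.mpr (Fin.ext h2.symm)
    calc N.ncard ≤ ({(⟨(v.val + n / 2) % n, hwlt⟩ : Fin n)} : Set (Fin n)).ncard :=
          Set.ncard_le_ncard hsub (Set.toFinite _)
      _ = 1 := Set.ncard_singleton _
  · -- t = 3 : the non-neighbours are the two cycle neighbours
    haveI : NeZero n := ⟨by omega⟩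
    have hone : ((1 : Fin n) : ℕ) = 1 := by
      have h1 : (1 : ℕ) < n := by omega
      simp [Fin.val_one', Nat.mod_eq_of_lt h1]
    have hsub : N ⊆ {v - 1, v + 1} := by
      intro y hy
      obtain ⟨hyv, hna⟩ := hy
      have hGA : G = Rn3 n := by rw [hG]; rfl
      rw [hGA] at hna
      simp only [Rn3, SimpleGraph.compl_adj, not_and, not_not] at hna
      have hadj := hna (fun h => hyv h.symm)
      rw [SimpleGraph.cycleGraph_adj'] at hadj
      simp only [Set.mem_insert_iff, Set.mem_singleton_iff]
      rcases hadj with h | h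
      · left
        have h2 : v - y = 1 := Fin.ext (by rw [hone]; exact h)
        have h3 := sub_eq_iff_eq_add.mp h2
        rw [h3]; abel
      · right
        have h2 : y - v = 1 := Fin.ext (by rw [hone]; exact h)
        have h3 := sub_eq_iff_eq_add.mp h2
        rw [h3]; abel
    have h2 : N.ncard ≤ 2 := by
      calc N.ncard ≤ ({v - 1, v + 1} : Set (Fin n)).ncard :=
            Set.ncard_le_ncard hsub (Set.toFinite _)
        _ ≤ 2 := by
            refine (Set.ncard_insert_le _ _).trans ?_
            rw [Set.ncard_singleton]
    omega
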